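/- For real numbers a, b, c, d with c ≥ 0, d ≥ 0: a² + 2ab ≤ 2|a|·√(c² + d + (a+b)²) + 2c|a| (where d ≥ 0). Consequently √((c+|a|)² + d + b²) ≥ √(c² + d + (a+b)²) − |a|. -/
import Mathlib

theorem eye_key_inequality (a b c d : ℝ) (hc : 0 ≤ c) (hd : 0 ≤ d) :
    a ^ 2 + 2 * a * b ≤ 2 * |a| * Real.sqrt (c ^ 2 + d + (a + b) ^ 2) + 2 * c * |a| ∧
    Real.sqrt (c ^ 2 + d + (a + b) ^ 2) - |a| ≤ Real.sqrt ((c + |a|) ^ 2 + d + b ^ 2) := by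
  have ha : 0 ≤ |a| := abs_nonneg a
  have hS : (0:ℝ) ≤ c ^ 2 + d + (a + b) ^ 2 := by positivity
  have hT : (0:ℝ) ≤ (c + |a|) ^ 2 + d + b ^ 2 := by positivity
  have hab : |a + b| ≤ Real.sqrt (c ^ 2 + d + (a + b) ^ 2) := by
    have := Real.sqrt_le_sqrt (by nlinarith [sq_nonneg c] : (a+b)^2 ≤ c ^ 2 + d + (a + b) ^ 2)
    rwa [Real.sqrt_sq_eq_abs] at this
  constructor
  · have h1 : a ^ 2 + 2 * a * b ≤ 2 * |a| * |a + b| := by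
      have h2 : a * (a + b) ≤ |a| * |a + b| := le_trans (le_abs_self _) (by rw [abs_mul])
      nlinarith [sq_nonneg a]
    calc a ^ 2 + 2 * a * b ≤ 2 * |a| * |a + b| := h1
      _ ≤ 2 * |a| * Real.sqrt (c ^ 2 + d + (a + b) ^ 2) := by
          exact mul_le_mul_of_nonneg_left hab (by positivity)
      _ ≤ _ := by nlinarith
  · have hb : |b| ≤ Real.sqrt ((c + |a|) ^ 2 + d + b ^ 2) := by
      have := Real.sqrt_le_sqrt (by nlinarith [sq_nonneg (c+|a|)] : b^2 ≤ (c + |a|) ^ 2 + d + b ^ 2)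
      rwa [Real.sqrt_sq_eq_abs] at this
    have key : c ^ 2 + d + (a + b) ^ 2 ≤
        (Real.sqrt ((c + |a|) ^ 2 + d + b ^ 2) + |a|) ^ 2 := by
      have hTsq : Real.sqrt ((c + |a|) ^ 2 + d + b ^ 2) ^ 2 = (c + |a|) ^ 2 + d + b ^ 2 :=
        Real.sq_sqrt hT
      have h2 : a * b ≤ |a| * |b| := le_trans (le_abs_self _) (by rw [abs_mul])
      nlinarith [mul_le_mul_of_nonneg_left hb ha, sq_abs a, mul_nonneg hc ha, Real.sqrt_nonneg ((c + |a|) ^ 2 + d + b ^ 2)]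
    have := Real.sqrt_le_sqrt key
    rw [Real.sqrt_sq (by positivity)] at this
    linarith
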